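/- For S_β = [[0, cos β],[0, i sin β]] with β ∈ (0, π/2), the conformal range DW_BCK^ℝ(S_β) equals the elliptical disk {(x,z) : x²/((√2/2 · cos β)²) + (z + 1/2)²/(1/4) ≤ 1}. -/

import Mathlib

/-- The conformal range (real Davis–Wielandt shell) in the BCK model. -/
noncomputable def DWR (A : Matrix (Fin 2) (Fin 2) ℂ) : Set (ℝ × ℝ) :=
  {p : ℝ × ℝ | ∃ x : EuclideanSpace ℂ (Fin 2), x ≠ 0 ∧
      p = (2 * (inner ℂ x (Matrix.toEuclideanLin A x) : ℂ).re /
            (‖Matrix.toEuclideanLin A x‖ ^ 2 + ‖x‖ ^ 2),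
           (‖Matrix.toEuclideanLin A x‖ ^ 2 - ‖x‖ ^ 2) /
            (‖Matrix.toEuclideanLin A x‖ ^ 2 + ‖x‖ ^ 2))}

lemma applem0 (β : ℝ) (x : EuclideanSpace ℂ (Fin 2)) :
    (Matrix.toEuclideanLin !![(0 : ℂ), (Real.cos β : ℂ); 0, Complex.I * (Real.sin β : ℂ)] x) 0
      = (Real.cos β : ℂ) * x 1 := by
  simp [Matrix.toEuclideanLin_apply, Matrix.mulVec, dotProduct, Matrix.vecHead, Matrix.vecTail, Fin.sum_univ_two]

lemma applem1 (β : ℝ) (x : EuclideanSpace ℂ (Fin 2)) :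
    (Matrix.toEuclideanLin !![(0 : ℂ), (Real.cos β : ℂ); 0, Complex.I * (Real.sin β : ℂ)] x) 1
      = Complex.I * (Real.sin β : ℂ) * x 1 := by
  simp [Matrix.toEuclideanLin_apply, Matrix.mulVec, dotProduct, Matrix.vecHead, Matrix.vecTail, Fin.sum_univ_two, mul_assoc]

lemma normx (x : EuclideanSpace ℂ (Fin 2)) : ‖x‖^2 = ‖x 0‖^2 + ‖x 1‖^2 := by
  rw [EuclideanSpace.norm_eq, Real.sq_sqrt (by positivity)]
  simp [Fin.sum_univ_two]

lemma normAx (β : ℝ) (x : EuclideanSpace ℂ (Fin 2)) :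
    ‖Matrix.toEuclideanLin !![(0 : ℂ), (Real.cos β : ℂ); 0, Complex.I * (Real.sin β : ℂ)] x‖^2
      = ‖x 1‖^2 := by
  rw [normx, applem0, applem1]
  rw [norm_mul, norm_mul, norm_mul]
  simp only [Complex.norm_I, Complex.norm_real, one_mul, Real.norm_eq_abs]
  rw [mul_pow, mul_pow, ← add_mul, sq_abs, sq_abs, Real.cos_sq_add_sin_sq, one_mul]

lemma innerAx (β : ℝ) (x : EuclideanSpace ℂ (Fin 2)) :
    (inner ℂ x (Matrix.toEuclideanLin !![(0 : ℂ), (Real.cos β : ℂ); 0, Complex.I * (Real.sin β : ℂ)] x) : ℂ).re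
      = Real.cos β * (starRingEnd ℂ (x 0) * x 1).re := by
  rw [show (inner ℂ x (Matrix.toEuclideanLin !![(0 : ℂ), (Real.cos β : ℂ); 0, Complex.I * (Real.sin β : ℂ)] x) : ℂ)
      = starRingEnd ℂ (x 0) * ((Real.cos β : ℂ) * x 1) + starRingEnd ℂ (x 1) * (Complex.I * (Real.sin β : ℂ) * x 1) by
    rw [← applem0 β x, ← applem1 β x]; simp [PiLp.inner_apply, Fin.sum_univ_two]; ring]
  rw [show (starRingEnd ℂ) (x 1) * (Complex.I * (Real.sin β : ℂ) * x 1)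
      = Complex.I * ((Real.sin β : ℂ) * ((starRingEnd ℂ) (x 1) * x 1)) by ring,
    ← Complex.normSq_eq_conj_mul_self]
  simp [Complex.add_re, Complex.mul_re, Complex.cos_ofReal_re]
  ring

set_option maxHeartbeats 1000000 in
theorem DWR_Sbeta (β : ℝ) (hβ : β ∈ Set.Ioo 0 (Real.pi / 2)) :
    DWR !![(0 : ℂ), (Real.cos β : ℂ); 0, Complex.I * (Real.sin β : ℂ)] =
      {p : ℝ × ℝ |
        p.1 ^ 2 / ((Real.sqrt 2 / 2 * Real.cos β) ^ 2)
          + (p.2 + 1 / 2) ^ 2 / (1 / 4) ≤ 1} := by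
  obtain ⟨hβ1, hβ2⟩ := hβ
  set c := Real.cos β with hc
  have hcpos : 0 < c := Real.cos_pos_of_mem_Ioo ⟨by linarith [Real.pi_pos], hβ2⟩
  have hcne : c ≠ 0 := ne_of_gt hcpos
  have hsq2 : (Real.sqrt 2 / 2 * c) ^ 2 = c ^ 2 / 2 := by
    rw [mul_pow, div_pow, Real.sq_sqrt (by norm_num : (2:ℝ) ≥ 0)]
    ring
  ext p
  obtain ⟨X, Z⟩ := p
  simp only [DWR, Set.mem_setOf_eq, hsq2]
  constructor
  · rintro ⟨x, hx, hp⟩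
    set s := ‖x 0‖^2 with hs
    set t := ‖x 1‖^2 with ht
    set r := (starRingEnd ℂ (x 0) * x 1).re with hr
    have hs0 : 0 ≤ s := sq_nonneg _
    have ht0 : 0 ≤ t := sq_nonneg _
    have hst : 0 < s + t := by
      have : 0 < ‖x‖ := norm_pos_iff.mpr hx
      have h2 : 0 < ‖x‖^2 := by positivity
      rwa [normx] at h2
    have hrst : r^2 ≤ s * t := by
      have h1 : |r| ≤ ‖starRingEnd ℂ (x 0) * x 1‖ := Complex.abs_re_le_norm _
      have h2 : ‖starRingEnd ℂ (x 0) * x 1‖ = ‖x 0‖ * ‖x 1‖ := by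
        rw [norm_mul, RCLike.norm_conj]
      calc r^2 = |r|^2 := (sq_abs r).symm
        _ ≤ (‖x 0‖ * ‖x 1‖)^2 := by rw [← h2]; exact pow_le_pow_left₀ (abs_nonneg _) h1 2
        _ = s * t := by rw [mul_pow]
    rw [normAx, innerAx, normx, ← hs, ← ht, ← hr, ← hc] at hp
    rw [Prod.mk.injEq] at hp
    obtain ⟨hp1, hp2⟩ := hp
    have hD : (0:ℝ) < s + 2 * t := by linarith
    have hDne : t + (s + t) ≠ 0 := by intro h; linarith
    rw [hp1, hp2]
    have key : (2 * (c * r) / (t + (s + t))) ^ 2 / (c ^ 2 / 2)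
        + ((t - (s + t)) / (t + (s + t)) + 1 / 2) ^ 2 / (1 / 4)
        = (8 * r^2 + (2*t - s)^2) / (s + 2*t)^2 := by
      field_simp
      ring
    rw [key, div_le_one (by positivity)]
    nlinarith [sq_nonneg (s - 2*t)]
  · intro hp
    have hZ2 : (Z + 1/2)^2 ≤ 1/4 := by
      have h1 : 0 ≤ X ^ 2 / (c ^ 2 / 2) := by positivity
      nlinarith
    have hZlb : -1 ≤ Z := by nlinarith
    have hZub : Z ≤ 0 := by nlinarith
    by_cases hZ0 : Z = 0
    · -- then X = 0, witness (0,1)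
      have hX0 : X = 0 := by
        have h1 : X ^ 2 / (c ^ 2 / 2) ≤ 0 := by rw [hZ0] at hp; nlinarith
        have h2 : X ^ 2 ≤ 0 := by
          have := (div_le_iff₀ (by positivity : (0:ℝ) < c ^ 2 / 2)).mp h1
          linarith [this]
        have := sq_nonneg X
        have hX2 : X ^ 2 = 0 := le_antisymm h2 this
        exact pow_eq_zero_iff (two_ne_zero).elim |>.mp hX2
      refine ⟨(WithLp.equiv 2 (Fin 2 → ℂ)).symm ![0, 1], ?_, ?_⟩
      · intro h
        have : ((WithLp.equiv 2 (Fin 2 → ℂ)).symm ![0, 1]) 1 = 0 := by rw [h]; rfl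
        simp at this
      · have e0 : ((WithLp.equiv 2 (Fin 2 → ℂ)).symm ![(0:ℂ), 1]) 0 = 0 := rfl
        have e1 : ((WithLp.equiv 2 (Fin 2 → ℂ)).symm ![(0:ℂ), 1]) 1 = 1 := rfl
        rw [Prod.mk.injEq]
        rw [normAx, innerAx, normx, e0, e1]
        simp [hX0, hZ0]
    · -- Z < 0
      have hZneg : Z < 0 := lt_of_le_of_ne hZub hZ0
      set s := -Z with hsdef
      set t := (1 + Z)/2 with htdef
      set r := X / (2 * c) with hrdef
      have hspos : 0 < s := by simp [hsdef]; linarith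
      have ht0 : 0 ≤ t := by rw [htdef]; linarith
      have hrst : r^2 ≤ s * t := by
        have he1 : X ^ 2 / (c ^ 2 / 2) = 2 * X ^ 2 / c ^ 2 := by ring
        have he2 : (Z + 1/2) ^ 2 / (1/4) = 4 * (Z + 1/2) ^ 2 := by ring
        rw [he1, he2] at hp
        have h1 : 2 * X ^ 2 / c ^ 2 ≤ 1 - 4 * (Z + 1/2) ^ 2 := by linarith
        have h2 : 2 * X ^ 2 ≤ (1 - 4 * (Z + 1/2) ^ 2) * c ^ 2 :=
          (div_le_iff₀ (by positivity)).mp h1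
        rw [hrdef, div_pow, div_le_iff₀ (by positivity), hsdef, htdef]
        nlinarith
      clear_value s t r
      set u := Real.sqrt s with hu
      have hupos : 0 < u := Real.sqrt_pos.mpr hspos
      have hu2 : u^2 = s := Real.sq_sqrt hspos.le
      set w := Real.sqrt (t - r^2/s) with hw
      have hwnn : 0 ≤ t - r^2/s := by
        rw [sub_nonneg, div_le_iff₀ hspos]
        nlinarith
      have hw2 : w^2 = t - r^2/s := Real.sq_sqrt hwnn
      set a : ℂ := (u : ℂ) with ha
      set b : ℂ := ((r/u : ℝ) : ℂ) + Complex.I * ((w : ℝ) : ℂ) with hb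
      clear_value u w a b
      have hune : u ≠ 0 := ne_of_gt hupos
      have hna : ‖a‖^2 = s := by
        rw [ha, Complex.norm_real, Real.norm_eq_abs, sq_abs, hu2]
      have hbre : b.re = r/u := by simp [hb]
      have hbim : b.im = w := by simp [hb]
      have hnb : ‖b‖^2 = t := by
        rw [Complex.sq_norm, Complex.normSq_apply, hbre, hbim]
        have h5 : r/u * (r/u) = r^2/s := by
          rw [div_mul_div_comm, ← pow_two, ← pow_two, hu2]
        have h6 : w * w = t - r^2/s := by rw [← sq, hw2]
        rw [h5, h6]
        ring
      have hre : (starRingEnd ℂ a * b).re = r := by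
        rw [ha, Complex.conj_ofReal, Complex.mul_re]
        rw [Complex.ofReal_re, Complex.ofReal_im, hbre, hbim]
        rw [zero_mul, sub_zero, mul_comm, div_mul_cancel₀ _ hune]
      refine ⟨(WithLp.equiv 2 (Fin 2 → ℂ)).symm ![a, b], ?_, ?_⟩
      · intro h
        have h0 : ((WithLp.equiv 2 (Fin 2 → ℂ)).symm ![a, b]) 0 = 0 := by rw [h]; rfl
        have h1 : a = 0 := h0
        rw [ha] at h1
        have h2 : u = 0 := by exact_mod_cast h1
        exact (ne_of_gt hupos) h2
      · have e0 : ((WithLp.equiv 2 (Fin 2 → ℂ)).symm ![a, b]) 0 = a := rfl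
        have e1 : ((WithLp.equiv 2 (Fin 2 → ℂ)).symm ![a, b]) 1 = b := rfl
        rw [Prod.mk.injEq]
        rw [normAx, innerAx, normx, e0, e1, hna, hnb, hre]
        have hden : t + (s + t) = 1 := by rw [hsdef, htdef]; ring
        rw [hden]
        constructor
        · rw [hrdef, ← hc]; field_simp
        · rw [hsdef, htdef]; ring
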